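/- Let θ₁ > θ₂ > 0 and let V₁ be a random variable such that V₁ + E₁ is distributed as E₂, where E₁ ~ Exp(θ₁) is independent of V₁ and E₂ ~ Exp(θ₂). Then the law of V₁ is the mixture (θ₂/θ₁)·δ₀ + (1 − θ₂/θ₁)·Exp(θ₂). -/

import Mathlib

open MeasureTheory ProbabilityTheory

open Real Set Filter Topology
open scoped ENNReal NNReal


namespace Stmt5Aux

lemma expMeasure_apply (r : ℝ) {s : Set ℝ} (hs : MeasurableSet s) :
    expMeasure r s = ∫⁻ x in s, exponentialPDF r x := by
  rw [expMeasure, gammaMeasure, withDensity_apply _ hs]; rfl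

lemma expMeasure_Iic {r : ℝ} (hr : 0 < r) (t : ℝ) :
    expMeasure r (Iic t) = ENNReal.ofReal (if 0 ≤ t then 1 - exp (-(r*t)) else 0) := by
  rw [expMeasure_apply r measurableSet_Iic, lintegral_exponentialPDF_eq_antiDeriv hr]

lemma expMeasure_Ioi {r : ℝ} (hr : 0 < r) (t : ℝ) :
    expMeasure r (Ioi t) = ENNReal.ofReal (exp (-(r * max t 0))) := by
  have : IsProbabilityMeasure (expMeasure r) := isProbabilityMeasure_expMeasure hr
  have h : expMeasure r (Ioi t) = 1 - expMeasure r (Iic t) := by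
    rw [← compl_Iic, prob_compl_eq_one_sub measurableSet_Iic]
  rw [h, expMeasure_Iic hr]
  rcases le_or_gt 0 t with h0 | h0
  · rw [if_pos h0, max_eq_left h0]
    have h1 : exp (-(r*t)) ≤ 1 := exp_le_one_iff.mpr (by nlinarith)
    rw [← ENNReal.ofReal_one, ← ENNReal.ofReal_sub _ (by linarith)]
    norm_num
  · rw [if_neg (not_le.2 h0), max_eq_right h0.le]
    simp

end Stmt5Aux

namespace Stmt5Aux

lemma hasDerivAt_exp_mul (c x : ℝ) : HasDerivAt (fun u => exp (c*u)) (exp (c*x) * c) x := by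
  simpa using ((hasDerivAt_id x).const_mul c).exp

lemma aux_calc {a b s t : ℝ} (hb : 0 < b) (hab : b < a) (hst : s ≤ t) :
    (1 - b/a) * exp (-(b*t)) * (exp (a*t) - exp (a*s)) ≤ exp ((a-b)*t) - exp ((a-b)*s) ∧
    exp ((a-b)*t) - exp ((a-b)*s) ≤ (1 - b/a) * exp (-(b*s)) * (exp (a*t) - exp (a*s)) := by
  have ha : 0 < a := hb.trans hab
  have hC : (1 - b/a) * a = a - b := by field_simp
  have hd : ∀ (C u : ℝ), HasDerivAt (fun u => C * exp (a*u) - exp ((a-b)*u))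
      (C * (exp (a*u) * a) - exp ((a-b)*u) * (a-b)) u := fun C u =>
    ((hasDerivAt_exp_mul a u).const_mul C).sub (hasDerivAt_exp_mul (a-b) u)
  have hcont : ∀ C : ℝ, ContinuousOn (fun u => C * exp (a*u) - exp ((a-b)*u)) (Icc s t) :=
    fun C => Continuous.continuousOn (by continuity)
  have hdiff : ∀ C : ℝ, DifferentiableOn ℝ (fun u => C * exp (a*u) - exp ((a-b)*u))
      (interior (Icc s t)) := fun C u hu => (hd C u).differentiableAt.differentiableWithinAt
  have hsplit : ∀ u : ℝ, exp ((a-b)*u) = exp (a*u) * exp (-(b*u)) := by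
    intro u; rw [← exp_add]; ring_nf
  constructor
  · -- antitone case, C = (1-b/a)*exp(-(b*t))
    have hanti : AntitoneOn (fun u => (1 - b/a) * exp (-(b*t)) * exp (a*u) - exp ((a-b)*u))
        (Icc s t) := by
      apply antitoneOn_of_deriv_nonpos (convex_Icc s t) (hcont _) (hdiff _)
      intro u hu
      rw [(hd _ u).deriv]
      have hu' : u ≤ t := ((interior_subset hu : u ∈ Icc s t)).2
      have h1 : exp (-(b*t)) ≤ exp (-(b*u)) := exp_le_exp.2 (by nlinarith)
      rw [hsplit u]
      have h2 : (1 - b/a) * exp (-(b*t)) * (exp (a*u) * a)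
          = (a-b) * (exp (-(b*t)) * exp (a*u)) := by rw [← hC]; ring
      nlinarith [h2, mul_le_mul_of_nonneg_left
        (mul_le_mul_of_nonneg_right h1 (exp_pos (a*u)).le) (sub_pos.2 hab).le]
    have h := hanti (left_mem_Icc.2 hst) (right_mem_Icc.2 hst) hst
    simp only at h
    nlinarith [h]
  · have hmono : MonotoneOn (fun u => (1 - b/a) * exp (-(b*s)) * exp (a*u) - exp ((a-b)*u))
        (Icc s t) := by
      apply monotoneOn_of_deriv_nonneg (convex_Icc s t) (hcont _) (hdiff _)
      intro u hu
      rw [(hd _ u).deriv]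
      have hu' : s ≤ u := ((interior_subset hu : u ∈ Icc s t)).1
      have h1 : exp (-(b*u)) ≤ exp (-(b*s)) := exp_le_exp.2 (by nlinarith)
      rw [hsplit u]
      have h2 : (1 - b/a) * exp (-(b*s)) * (exp (a*u) * a)
          = (a-b) * (exp (-(b*s)) * exp (a*u)) := by rw [← hC]; ring
      nlinarith [h2, mul_le_mul_of_nonneg_left
        (mul_le_mul_of_nonneg_right h1 (exp_pos (a*u)).le) (sub_pos.2 hab).le]
    have h := hmono (left_mem_Icc.2 hst) (right_mem_Icc.2 hst) hst
    simp only at h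
    nlinarith [h]

end Stmt5Aux

/-- if `V₁ + E₁ ~ Exp(θ₂)` with `E₁ ~ Exp(θ₁)` independent of `V₁`
and `θ₁ > θ₂ > 0`, then the law of `V₁` is the mixture
`(θ₂/θ₁)·δ₀ + (1 − θ₂/θ₁)·Exp(θ₂)`. -/
theorem stmt_5 {Ω : Type*} [MeasureSpace Ω] {P : Measure Ω} [IsProbabilityMeasure P]
    (θ₁ θ₂ : ℝ) (h₂ : 0 < θ₂) (h₁ : θ₂ < θ₁)
    (V₁ E₁ : Ω → ℝ) (hV₁ : Measurable V₁) (hE₁ : Measurable E₁)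
    (hVnn : ∀ ω, 0 ≤ V₁ ω)
    (hind : IndepFun V₁ E₁ P)
    (hE₁law : Measure.map E₁ P = expMeasure θ₁)
    (hsum : Measure.map (fun ω => V₁ ω + E₁ ω) P = expMeasure θ₂) :
    Measure.map V₁ P
      = ENNReal.ofReal (θ₂ / θ₁) • Measure.dirac (0 : ℝ)
        + ENNReal.ofReal (1 - θ₂ / θ₁) • expMeasure θ₂ := by
  have hθ₁ : 0 < θ₁ := h₂.trans h₁
  set μ : Measure ℝ := Measure.map V₁ P with hμdef
  haveI hμprob : IsProbabilityMeasure μ := Measure.isProbabilityMeasure_map hV₁.aemeasurable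
  haveI : IsProbabilityMeasure (expMeasure θ₁) := isProbabilityMeasure_expMeasure hθ₁
  -- the target tail function
  set ψ : ℝ → ℝ := fun u => (1 - θ₂/θ₁) * exp (-(θ₂ * u)) with hψdef
  have hψcont : Continuous ψ := by fun_prop
  have hfrac : (0:ℝ) ≤ 1 - θ₂/θ₁ := by
    have : θ₂/θ₁ ≤ 1 := by rw [div_le_one hθ₁]; exact h₁.le
    linarith
  have hψnn : ∀ u, 0 ≤ ψ u := fun u => by positivity
  -- joint law
  have hprod : Measure.map (fun ω => (V₁ ω, E₁ ω)) P = μ.prod (expMeasure θ₁) := by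
    rw [← hE₁law]
    exact (indepFun_iff_map_prod_eq_prod_map_map hV₁.aemeasurable hE₁.aemeasurable).mp hind
  -- tail equation
  have htail : ∀ t : ℝ, ENNReal.ofReal (exp (-(θ₂ * max t 0)))
      = ∫⁻ v, ENNReal.ofReal (exp (-(θ₁ * max (t - v) 0))) ∂μ := by
    intro t
    have hS : MeasurableSet {p : ℝ × ℝ | t < p.1 + p.2} :=
      measurableSet_lt measurable_const (measurable_fst.add measurable_snd)
    have h1 : expMeasure θ₂ (Ioi t)
        = (μ.prod (expMeasure θ₁)) {p : ℝ × ℝ | t < p.1 + p.2} := by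
      rw [← hsum, Measure.map_apply (f := fun ω => V₁ ω + E₁ ω) (hV₁.add hE₁) measurableSet_Ioi, ← hprod,
        Measure.map_apply (hV₁.prodMk hE₁) hS]
      rfl
    rw [← Stmt5Aux.expMeasure_Ioi h₂ t, h1, Measure.prod_apply hS]
    apply lintegral_congr
    intro v
    have h2 : Prod.mk v ⁻¹' {p : ℝ × ℝ | t < p.1 + p.2} = Ioi (t - v) := by
      ext e; simp [sub_lt_iff_lt_add']
    rw [h2, Stmt5Aux.expMeasure_Ioi hθ₁]
  -- split the tail equation
  have hmeas1 : ∀ t : ℝ, Measurable fun v => ENNReal.ofReal (exp (-(θ₁ * max (t - v) 0))) := by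
    intro t; fun_prop
  have hsplit : ∀ t : ℝ, ENNReal.ofReal (exp (-(θ₂ * max t 0)))
      = (∫⁻ v in Iic t, ENNReal.ofReal (exp (-(θ₁ * (t - v)))) ∂μ) + μ (Ioi t) := by
    intro t
    rw [htail t, ← lintegral_add_compl (fun v => ENNReal.ofReal (exp (-(θ₁ * max (t - v) 0))))
      (measurableSet_Iic (a := t)), compl_Iic]
    congr 1
    · refine setLIntegral_congr_fun measurableSet_Iic (fun v hv => ?_)
      rw [max_eq_left (by simp only [mem_Iic] at hv; linarith)]
    · rw [← setLIntegral_one]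
      refine setLIntegral_congr_fun measurableSet_Ioi (fun v hv => ?_)
      rw [max_eq_right (by simp only [mem_Ioi] at hv; linarith), mul_zero, neg_zero, exp_zero,
        ENNReal.ofReal_one]
  -- K
  set K : ℝ → ℝ≥0∞ := fun t => ∫⁻ v in Iic t, ENNReal.ofReal (exp (θ₁ * v)) ∂μ with hKdef
  have hmeasK : Measurable fun v : ℝ => ENNReal.ofReal (exp (θ₁ * v)) := by fun_prop
  have hKfin : ∀ t, K t ≠ ⊤ := by
    intro t
    have : K t ≤ ENNReal.ofReal (exp (θ₁ * t)) * μ (Iic t) := by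
      rw [← setLIntegral_const]
      refine setLIntegral_mono measurable_const fun v hv => ?_
      exact ENNReal.ofReal_le_ofReal (exp_le_exp.2 (mul_le_mul_of_nonneg_left hv hθ₁.le))
    exact (this.trans_lt (ENNReal.mul_lt_top ENNReal.ofReal_lt_top (measure_lt_top μ _))).ne
  -- star equation (real version)
  set g : ℝ → ℝ := fun t => (μ (Ioi t)).toReal with hgdef
  set κ : ℝ → ℝ := fun t => (K t).toReal with hκdef
  have hstarR : ∀ t : ℝ, 0 ≤ t → exp ((θ₁ - θ₂) * t) = exp (θ₁ * t) * g t + κ t := by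
    intro t ht
    have hstar : ENNReal.ofReal (exp ((θ₁ - θ₂) * t))
        = ENNReal.ofReal (exp (θ₁ * t)) * μ (Ioi t) + K t := by
      have h3 := congrArg (fun x => ENNReal.ofReal (exp (θ₁ * t)) * x) (hsplit t)
      rw [← ENNReal.ofReal_mul (exp_nonneg _), ← exp_add] at h3
      rw [show θ₁ * t + -(θ₂ * max t 0) = (θ₁ - θ₂) * t by rw [max_eq_left ht]; ring] at h3
      have h9 : Measurable fun v : ℝ => ENNReal.ofReal (exp (-(θ₁ * (t - v)))) := by fun_prop
      have h8 : ENNReal.ofReal (exp (θ₁ * t))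
          * ∫⁻ v in Iic t, ENNReal.ofReal (exp (-(θ₁ * (t - v)))) ∂μ = K t := by
        rw [← lintegral_const_mul _ h9, hKdef]
        refine setLIntegral_congr_fun measurableSet_Iic (fun v hv => ?_)
        rw [← ENNReal.ofReal_mul (exp_nonneg _), ← exp_add]
        congr 2
        ring
      rw [h3, mul_add, h8, add_comm]
    have h4 := congrArg ENNReal.toReal hstar
    rwa [ENNReal.toReal_ofReal (exp_nonneg _), ENNReal.toReal_add
      (ENNReal.mul_ne_top ENNReal.ofReal_ne_top (measure_ne_top μ _)) (hKfin t),
      ENNReal.toReal_mul, ENNReal.toReal_ofReal (exp_nonneg _)] at h4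
  -- increments
  have hginc : ∀ s t : ℝ, s ≤ t → g s - g t = (μ (Ioc s t)).toReal := by
    intro s t hst
    have : μ (Ioi s) = μ (Ioc s t) + μ (Ioi t) := by
      rw [← measure_union (Ioc_disjoint_Ioi le_rfl) measurableSet_Ioi, Ioc_union_Ioi_eq_Ioi hst]
    rw [hgdef]
    simp only
    rw [this, ENNReal.toReal_add (measure_ne_top μ _) (measure_ne_top μ _)]
    ring
  have hκinc : ∀ s t : ℝ, s ≤ t →
      exp (θ₁ * s) * (g s - g t) ≤ κ t - κ s ∧ κ t - κ s ≤ exp (θ₁ * t) * (g s - g t) := by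
    intro s t hst
    have hKst : K t = K s + ∫⁻ v in Ioc s t, ENNReal.ofReal (exp (θ₁ * v)) ∂μ := by
      rw [hKdef]
      simp only
      rw [← lintegral_union measurableSet_Ioc (Iic_disjoint_Ioc le_rfl), Iic_union_Ioc_eq_Iic hst]
    have hIfin : (∫⁻ v in Ioc s t, ENNReal.ofReal (exp (θ₁ * v)) ∂μ) ≠ ⊤ := by
      intro h
      exact hKfin t (by rw [hKst, h]; simp)
    have hκeq : κ t - κ s = (∫⁻ v in Ioc s t, ENNReal.ofReal (exp (θ₁ * v)) ∂μ).toReal := by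
      rw [hκdef]; simp only
      rw [hKst, ENNReal.toReal_add (hKfin s) hIfin]; ring
    have hlow : ENNReal.ofReal (exp (θ₁ * s)) * μ (Ioc s t)
        ≤ ∫⁻ v in Ioc s t, ENNReal.ofReal (exp (θ₁ * v)) ∂μ := by
      rw [← setLIntegral_const]
      refine setLIntegral_mono hmeasK fun v hv => ?_
      exact ENNReal.ofReal_le_ofReal (exp_le_exp.2 (mul_le_mul_of_nonneg_left hv.1.le hθ₁.le))
    have hhigh : (∫⁻ v in Ioc s t, ENNReal.ofReal (exp (θ₁ * v)) ∂μ)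
        ≤ ENNReal.ofReal (exp (θ₁ * t)) * μ (Ioc s t) := by
      rw [← setLIntegral_const]
      refine setLIntegral_mono measurable_const fun v hv => ?_
      exact ENNReal.ofReal_le_ofReal (exp_le_exp.2 (mul_le_mul_of_nonneg_left hv.2 hθ₁.le))
    constructor
    · rw [hκeq, hginc s t hst]
      calc exp (θ₁ * s) * (μ (Ioc s t)).toReal
          = (ENNReal.ofReal (exp (θ₁ * s)) * μ (Ioc s t)).toReal := by
            rw [ENNReal.toReal_mul, ENNReal.toReal_ofReal (exp_nonneg _)]
        _ ≤ _ := ENNReal.toReal_mono hIfin hlow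
    · rw [hκeq, hginc s t hst]
      calc (∫⁻ v in Ioc s t, ENNReal.ofReal (exp (θ₁ * v)) ∂μ).toReal
          ≤ (ENNReal.ofReal (exp (θ₁ * t)) * μ (Ioc s t)).toReal :=
            ENNReal.toReal_mono (ENNReal.mul_ne_top ENNReal.ofReal_ne_top (measure_ne_top μ _))
              hhigh
        _ = exp (θ₁ * t) * (μ (Ioc s t)).toReal := by
            rw [ENNReal.toReal_mul, ENNReal.toReal_ofReal (exp_nonneg _)]
  -- key inequalities
  have key : ∀ s t : ℝ, 0 ≤ s → s < t → g t ≤ ψ s ∧ ψ t ≤ g s := by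
    intro s t hs hst
    have hEpos : 0 < exp (θ₁ * t) - exp (θ₁ * s) :=
      sub_pos.2 (exp_lt_exp.2 (by nlinarith))
    have hFs := hstarR s hs
    have hFt := hstarR t (hs.trans hst.le)
    obtain ⟨hk1, hk2⟩ := hκinc s t hst.le
    obtain ⟨hc1, hc2⟩ := Stmt5Aux.aux_calc h₂ h₁ hst.le
    -- F t - F s bounds from measure side
    have hub : exp ((θ₁-θ₂)*t) - exp ((θ₁-θ₂)*s) ≤ g s * (exp (θ₁*t) - exp (θ₁*s)) := by
      nlinarith [hk2]
    have hlb : g t * (exp (θ₁*t) - exp (θ₁*s)) ≤ exp ((θ₁-θ₂)*t) - exp ((θ₁-θ₂)*s) := by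
      nlinarith [hk1]
    have hψs : ψ s = (1 - θ₂/θ₁) * exp (-(θ₂*s)) := rfl
    have hψt : ψ t = (1 - θ₂/θ₁) * exp (-(θ₂*t)) := rfl
    constructor
    · refine le_of_mul_le_mul_right ?_ hEpos
      rw [hψs]
      linarith [hlb.trans hc2]
    · refine le_of_mul_le_mul_right ?_ hEpos
      rw [hψt]
      linarith [hc1.trans hub]
  -- ψ ≤ g on [0, ∞)
  have hψg : ∀ s : ℝ, 0 ≤ s → ψ s ≤ g s := by
    intro s hs
    have htend : Tendsto ψ (𝓝[>] s) (𝓝 (ψ s)) :=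
      (hψcont.tendsto s).mono_left nhdsWithin_le_nhds
    refine le_of_tendsto htend ?_
    filter_upwards [self_mem_nhdsWithin] with t ht
    exact (key s t hs ht).2
  -- g ≤ ψ on (0, ∞)
  have hgψ : ∀ t : ℝ, 0 < t → g t ≤ ψ t := by
    intro t ht
    have htend : Tendsto ψ (𝓝[<] t) (𝓝 (ψ t)) :=
      (hψcont.tendsto t).mono_left nhdsWithin_le_nhds
    refine ge_of_tendsto htend ?_
    filter_upwards [Ico_mem_nhdsLT_of_mem (right_mem_Ioc.2 ht)] with s hs
    exact (key s t hs.1 hs.2).1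
  -- tail values
  have hIoi : ∀ t : ℝ, 0 < t → μ (Ioi t) = ENNReal.ofReal (ψ t) := by
    intro t ht
    rw [← ENNReal.ofReal_toReal (measure_ne_top μ (Ioi t))]
    exact congrArg ENNReal.ofReal (le_antisymm (hgψ t ht) (hψg t ht.le))
  have hIoi0 : μ (Ioi 0) = ENNReal.ofReal (ψ 0) := by
    have hunion : Ioi (0:ℝ) = ⋃ n : ℕ, Ioi ((n+1 : ℝ)⁻¹) := by
      ext x
      simp only [mem_Ioi, mem_iUnion]
      constructor
      · intro hx
        obtain ⟨n, hn⟩ := exists_nat_one_div_lt hx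
        exact ⟨n, by rw [one_div] at hn; exact_mod_cast hn⟩
      · rintro ⟨n, hn⟩
        have : (0:ℝ) < (n+1 : ℝ)⁻¹ := by positivity
        linarith
    have hmono : Monotone fun n : ℕ => Ioi ((n+1 : ℝ)⁻¹) := by
      intro m n hmn
      apply Ioi_subset_Ioi
      have : (m:ℝ) ≤ (n:ℝ) := by exact_mod_cast hmn
      gcongr
    have h1 : Tendsto (fun n : ℕ => μ (Ioi ((n+1 : ℝ)⁻¹))) atTop (𝓝 (μ (Ioi 0))) := by
      rw [hunion]
      exact tendsto_measure_iUnion_atTop hmono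
    have h2 : Tendsto (fun n : ℕ => μ (Ioi ((n+1 : ℝ)⁻¹))) atTop
        (𝓝 (ENNReal.ofReal (ψ 0))) := by
      have heq : ∀ n : ℕ, μ (Ioi ((n+1 : ℝ)⁻¹)) = ENNReal.ofReal (ψ ((n+1 : ℝ)⁻¹)) :=
        fun n => hIoi _ (by positivity)
      simp only [heq]
      refine (ENNReal.continuous_ofReal.tendsto _).comp ?_
      refine (hψcont.tendsto 0).comp ?_
      have := tendsto_one_div_add_atTop_nhds_zero_nat (𝕜 := ℝ)
      simpa [one_div] using this
    exact tendsto_nhds_unique h1 h2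
  have hIoi' : ∀ t : ℝ, 0 ≤ t → μ (Ioi t) = ENNReal.ofReal (ψ t) := by
    intro t ht
    rcases eq_or_lt_of_le ht with h | h
    · rw [← h]; exact hIoi0
    · exact hIoi t h
  -- conclude by ext on Iic
  have hμIio : μ (Iio 0) = 0 := by
    rw [hμdef, Measure.map_apply hV₁ measurableSet_Iio]
    convert measure_empty
    · ext ω; simp [not_lt.2 (hVnn ω)]
    · infer_instance
  refine Measure.ext_of_Iic μ _ fun x => ?_
  have hRHS : (ENNReal.ofReal (θ₂ / θ₁) • Measure.dirac (0:ℝ)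
      + ENNReal.ofReal (1 - θ₂ / θ₁) • expMeasure θ₂) (Iic x)
      = ENNReal.ofReal (θ₂ / θ₁) * (if (0:ℝ) ≤ x then 1 else 0)
        + ENNReal.ofReal (1 - θ₂ / θ₁) * ENNReal.ofReal (if 0 ≤ x then 1 - exp (-(θ₂*x)) else 0) := by
    rw [Measure.add_apply, Measure.smul_apply, Measure.smul_apply, smul_eq_mul, smul_eq_mul,
      Measure.dirac_apply' _ measurableSet_Iic, Stmt5Aux.expMeasure_Iic h₂]
    simp [indicator, mem_Iic]
  rcases le_or_gt 0 x with hx | hx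
  · have hcompl : μ (Iic x) = 1 - μ (Ioi x) := by
      rw [← compl_Ioi, prob_compl_eq_one_sub measurableSet_Ioi]
    have h5 : exp (-(θ₂*x)) ≤ 1 := exp_le_one_iff.mpr (by nlinarith)
    have hψx1 : ψ x ≤ 1 := by
      show (1 - θ₂/θ₁) * exp (-(θ₂*x)) ≤ 1
      have h7 : (1 - θ₂/θ₁) * exp (-(θ₂*x)) ≤ 1 * exp (-(θ₂*x)) :=
        mul_le_mul_of_nonneg_right (by nlinarith [div_nonneg h₂.le hθ₁.le]) (exp_pos _).le
      nlinarith
    rw [hcompl, hIoi' x hx, hRHS, if_pos hx, if_pos hx, mul_one]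
    rw [← ENNReal.ofReal_one, ← ENNReal.ofReal_sub _ (hψnn x),
      ← ENNReal.ofReal_mul hfrac, ← ENNReal.ofReal_add
        (by positivity) (mul_nonneg hfrac (by linarith))]
    congr 1
    show 1 - (1 - θ₂/θ₁) * exp (-(θ₂*x)) = _
    field_simp
    ring
  · rw [hRHS, if_neg (not_le.2 hx), if_neg (not_le.2 hx), mul_zero, ENNReal.ofReal_zero,
      mul_zero, add_zero]
    exact measure_mono_null (Iic_subset_Iio.2 hx) hμIio
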